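/- arXiv:2501.00770 — 5 statements merged into one kernel-verified Lean document; each statement's English description precedes it below -/
import Mathlib

section
/- Let A be a finite aperiodic semigroup and S a finite semigroup. The projection homomorphism from the wreath product A ≀ S onto S is an aperiodic morphism, i.e., it is injective on every subgroup of A ≀ S. -/
/-- Iterated power in a semigroup: `spow x n = x^(n+1)`. -/
def spow {S : Type*} [Semigroup S] (x : S) : ℕ → S
  | 0 => x
  | n + 1 => spow x n * x

/-- The wreath product `A ≀ S`: underlying set `A^(S¹) × S`. -/
def Wr (A S : Type*) := (WithOne S → A) × S

instance {A S : Type*} [Semigroup A] [Semigroup S] : Semigroup (Wr A S) where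
  mul p q := (fun x => p.1 x * q.1 (x * (p.2 : WithOne S)), p.2 * q.2)
  mul_assoc p q r := by
    refine Prod.ext ?_ (mul_assoc _ _ _)
    funext x
    show (p.1 x * q.1 (x * (p.2 : WithOne S))) *
        r.1 (x * ((p.2 * q.2 : S) : WithOne S)) =
      p.1 x * (q.1 (x * (p.2 : WithOne S)) *
        r.1 ((x * (p.2 : WithOne S)) * (q.2 : WithOne S)))
    rw [WithOne.coe_mul, ← mul_assoc, mul_assoc (p.1 x)]

/-- The projection of the wreath product onto the second factor. -/
def wrProj {A S : Type*} [Semigroup A] [Semigroup S] : Wr A S →ₙ* S where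
  toFun p := p.2
  map_mul' _ _ := rfl

/-- A subset `G` of a semigroup is a subgroup if it is a nonempty subsemigroup
containing an identity element for `G` and inverses. -/
def IsSubgroupSet {S : Type*} [Semigroup S] (G : Set S) : Prop :=
  G.Nonempty ∧ (∀ a ∈ G, ∀ b ∈ G, a * b ∈ G) ∧
    ∃ e ∈ G, (∀ x ∈ G, e * x = x ∧ x * e = x) ∧
      ∀ x ∈ G, ∃ y ∈ G, x * y = e ∧ y * x = e

lemma spow_stab {T : Type*} [Semigroup T] {a : T} {n : ℕ}
    (h : spow a n = spow a (n + 1)) (k : ℕ) : spow a (n + k) = spow a (n + k + 1) := by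
  induction k with
  | zero => exact h
  | succ k ih =>
    show spow a (n + k) * a = spow a (n + k + 1) * a
    rw [ih]

lemma exists_uniform {A : Type*} [Semigroup A] [Fintype A]
    (hA : ∀ a : A, ∃ n : ℕ, spow a n = spow a (n + 1)) :
    ∃ N : ℕ, ∀ a : A, spow a N = spow a (N + 1) := by
  choose f hf using hA
  refine ⟨Finset.univ.sup f, fun a => ?_⟩
  obtain ⟨k, hk⟩ := Nat.le.dest (Finset.le_sup (Finset.mem_univ a) : f a ≤ _)
  rw [← hk]
  exact spow_stab (hf a) k

/-- If `A` is a finite aperiodic semigroup and `S` a finite semigroup, then the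
projection `A ≀ S → S` is an aperiodic morphism: it is injective on every
subgroup of `A ≀ S`. -/
theorem wreath_projection_aperiodic
    {A S : Type*} [Semigroup A] [Semigroup S] [Fintype A] [Fintype S]
    (hA : ∀ a : A, ∃ n : ℕ, spow a n = spow a (n + 1)) :
    ∀ G : Set (Wr A S), IsSubgroupSet G → Set.InjOn (wrProj : Wr A S →ₙ* S) G := by
  obtain ⟨N, hN⟩ := exists_uniform hA
  rintro G ⟨-, hmul, e, heG, hid, hinv⟩
  have hspow_mem : ∀ k ∈ G, ∀ n, spow k n ∈ G := by
    intro k hk n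
    induction n with
    | zero => exact hk
    | succ n ih => exact hmul _ ih _ hk
  have he2 : e.2 * e.2 = e.2 := congrArg Prod.snd (hid e heG).1
  have key : ∀ k ∈ G, k.2 = e.2 → k = e := by
    intro k hk h2
    have hs : k.2 * k.2 = k.2 := by rw [h2]; exact he2
    have hsnd : ∀ n, (spow k n).2 = k.2 := by
      intro n
      induction n with
      | zero => rfl
      | succ n ih => show (spow k n).2 * k.2 = k.2; rw [ih, hs]
    have hfst : ∀ n, ∀ x, (spow k (n + 1)).1 x
        = k.1 x * spow (k.1 (x * (k.2 : WithOne S))) n := by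
      intro n
      induction n with
      | zero => intro x; rfl
      | succ n ih =>
        intro x
        show (spow k (n + 1)).1 x *
            k.1 (x * ((spow k (n + 1)).2 : WithOne S)) = _
        rw [hsnd, ih]
        exact mul_assoc _ _ _
    have hstab : spow k (N + 1) = spow k (N + 2) := by
      refine Prod.ext ?_ ?_
      · funext x
        rw [hfst, hfst, hN]
      · rw [hsnd, hsnd]
    obtain ⟨p', hp'G, -, hq2⟩ := hinv _ (hspow_mem k hk (N + 1))
    have hstep : spow k (N + 1) * k = spow k (N + 1) := hstab.symm
    calc k = e * k := ((hid k hk).1).symm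
      _ = (p' * spow k (N + 1)) * k := by rw [hq2]
      _ = p' * (spow k (N + 1) * k) := mul_assoc _ _ _
      _ = p' * spow k (N + 1) := by rw [hstep]
      _ = e := hq2
  intro g hg h hh hproj
  obtain ⟨h', hh'G, hhh', hh'h⟩ := hinv h hh
  have hm : g * h' ∈ G := hmul _ hg _ hh'G
  have h2 : (g * h').2 = e.2 := by
    show g.2 * h'.2 = e.2
    have hgh : g.2 = h.2 := hproj
    rw [hgh]
    exact congrArg Prod.snd hhh'
  have hgh' : g * h' = e := key _ hm h2
  calc g = g * e := ((hid g hg).2).symm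
    _ = g * (h' * h) := by rw [hh'h]
    _ = (g * h') * h := (mul_assoc _ _ _).symm
    _ = e * h := by rw [hgh']
    _ = h := (hid h hh).1
end

section
/- Let S be a finite semigroup, let 𝓛 be the set of regular L-classes of S, and let S act partially on 𝓛 by L · s = Ls if Ls lies in the same D-class as L, and undefined otherwise. Then this is a well-defined action by partial functions, i.e., each s ∈ S induces a partial function on 𝓛 and the assignment is compatible with multiplication. -/
section Green

variable {S : Type*} [Semigroup S]

/-- `x ∈ S¹ y`. -/
def lLe (x y : S) : Prop := x = y ∨ ∃ t, x = t * y

/-- Green's `L`-equivalence: `S¹x = S¹y`. -/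
def LEquiv (x y : S) : Prop := lLe x y ∧ lLe y x

/-- `x ∈ y S¹`. -/
def rLe (x y : S) : Prop := x = y ∨ ∃ t, x = y * t

/-- Green's `R`-equivalence: `xS¹ = yS¹`. -/
def REquiv (x y : S) : Prop := rLe x y ∧ rLe y x

/-- Green's `D`-equivalence: the composite `L ∘ R`. -/
def DEquiv (x y : S) : Prop := ∃ z, LEquiv x z ∧ REquiv z y

/-- `x` is a regular element. -/
def IsRegularElem (x : S) : Prop := ∃ y, x = x * y * x

end Green

namespace GreenAux

variable {M : Type*} [Monoid M]

def lle (a b : M) : Prop := ∃ t, a = t * b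
def rle (a b : M) : Prop := ∃ t, a = b * t
def leq (a b : M) : Prop := lle a b ∧ lle b a
def req (a b : M) : Prop := rle a b ∧ rle b a
def deq (a b : M) : Prop := ∃ z, leq a z ∧ req z b

lemma lle_refl (a : M) : lle a a := ⟨1, (one_mul a).symm⟩
lemma rle_refl (a : M) : rle a a := ⟨1, (mul_one a).symm⟩

lemma lle_trans {a b c : M} (h1 : lle a b) (h2 : lle b c) : lle a c := by
  obtain ⟨t, rfl⟩ := h1; obtain ⟨u, rfl⟩ := h2; exact ⟨t * u, (mul_assoc _ _ _).symm⟩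

lemma rle_trans {a b c : M} (h1 : rle a b) (h2 : rle b c) : rle a c := by
  obtain ⟨t, rfl⟩ := h1; obtain ⟨u, rfl⟩ := h2; exact ⟨u * t, mul_assoc _ _ _⟩

lemma leq_refl (a : M) : leq a a := ⟨lle_refl a, lle_refl a⟩
lemma req_refl (a : M) : req a a := ⟨rle_refl a, rle_refl a⟩
lemma leq_symm {a b : M} (h : leq a b) : leq b a := ⟨h.2, h.1⟩
lemma req_symm {a b : M} (h : req a b) : req b a := ⟨h.2, h.1⟩
lemma leq_trans {a b c : M} (h1 : leq a b) (h2 : leq b c) : leq a c :=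
  ⟨lle_trans h1.1 h2.1, lle_trans h2.2 h1.2⟩
lemma req_trans {a b c : M} (h1 : req a b) (h2 : req b c) : req a c :=
  ⟨rle_trans h1.1 h2.1, rle_trans h2.2 h1.2⟩

lemma lle_mul_right {a b : M} (c : M) (h : lle a b) : lle (a * c) (b * c) := by
  obtain ⟨t, rfl⟩ := h; exact ⟨t, mul_assoc _ _ _⟩

lemma leq_mul_right {a b : M} (c : M) (h : leq a b) : leq (a * c) (b * c) :=
  ⟨lle_mul_right c h.1, lle_mul_right c h.2⟩

/-- `R ∘ L ⊆ L ∘ R` : if `a L b` and `b R c` then there is `d` with `a R d` and `d L c`. -/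
lemma swap1 {a b c : M} (hL : leq a b) (hR : req b c) : ∃ d, req a d ∧ leq d c := by
  obtain ⟨⟨u, hu⟩, ⟨v, hv⟩⟩ := hL
  obtain ⟨⟨q, hq⟩, ⟨p, hp⟩⟩ := hR
  refine ⟨a * p, ⟨⟨q, ?_⟩, ⟨p, rfl⟩⟩, ⟨u, ?_⟩, ⟨v, ?_⟩⟩
  · -- a = (a * p) * q
    calc a = u * b := hu
    _ = u * (c * q) := by rw [← hq]
    _ = u * ((b * p) * q) := by rw [← hp]
    _ = (u * b) * p * q := by simp [mul_assoc]
    _ = (a * p) * q := by rw [← hu]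
  · -- a * p = u * c
    calc a * p = (u * b) * p := by rw [hu]
    _ = u * (b * p) := by rw [mul_assoc]
    _ = u * c := by rw [← hp]
  · -- c = v * (a * p)
    calc c = b * p := hp
    _ = (v * a) * p := by rw [← hv]
    _ = v * (a * p) := mul_assoc _ _ _

/-- `L ∘ R ⊆ R ∘ L`. -/
lemma swap2 {a b c : M} (hR : req a b) (hL : leq b c) : ∃ d, leq a d ∧ req d c := by
  obtain ⟨⟨p, hp⟩, ⟨q, hq⟩⟩ := hR
  obtain ⟨⟨u, hu⟩, ⟨v, hv⟩⟩ := hL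
  refine ⟨v * a, ⟨⟨?_, ⟨v, rfl⟩⟩, ⟨?_, ?_⟩⟩⟩
  · -- a = ? * (v * a)
    refine ⟨u, ?_⟩
    calc a = b * p := hp
    _ = (u * c) * p := by rw [← hu]
    _ = (u * (v * b)) * p := by rw [← hv]
    _ = u * (v * (b * p)) := by simp [mul_assoc]
    _ = u * (v * a) := by rw [← hp]
  · -- v * a = c * ?
    refine ⟨p, ?_⟩
    calc v * a = v * (b * p) := by rw [hp]
    _ = (v * b) * p := (mul_assoc _ _ _).symm
    _ = c * p := by rw [← hv]
  · -- c = (v * a) * ?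
    refine ⟨q, ?_⟩
    calc c = v * b := hv
    _ = v * (a * q) := by rw [hq]
    _ = (v * a) * q := (mul_assoc _ _ _).symm

lemma deq_refl (a : M) : deq a a := ⟨a, leq_refl a, req_refl a⟩

lemma deq_symm {a b : M} (h : deq a b) : deq b a := by
  obtain ⟨z, hl, hr⟩ := h
  obtain ⟨d, hrd, hld⟩ := swap1 hl hr
  exact ⟨d, leq_symm hld, req_symm hrd⟩

lemma deq_trans {a b c : M} (h1 : deq a b) (h2 : deq b c) : deq a c := by
  obtain ⟨z, hl1, hr1⟩ := h1
  obtain ⟨w, hl2, hr2⟩ := h2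
  obtain ⟨d, hld, hrd⟩ := swap2 hr1 hl2
  exact ⟨d, leq_trans hl1 hld, req_trans hrd hr2⟩

lemma leq_deq {a b : M} (h : leq a b) : deq a b := ⟨b, h, req_refl b⟩
lemma req_deq {a b : M} (h : req a b) : deq a b := ⟨a, leq_refl a, h⟩

lemma iter_sandwich {c v w : M} (h : c = v * c * w) : ∀ n : ℕ, c = v ^ n * c * w ^ n := by
  intro n
  induction n with
  | zero => simp
  | succ n ih =>
    calc c = v * c * w := h
    _ = v * (v ^ n * c * w ^ n) * w := by rw [← ih]
    _ = (v * v ^ n) * c * (w ^ n * w) := by simp [mul_assoc]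
    _ = v ^ (n + 1) * c * w ^ (n + 1) := by rw [pow_succ', pow_succ]

/-- Stability in a finite monoid: `a ≤_R c` and `a D c` imply `a R c`. -/
lemma stab [Finite M] {a c : M} (hle : rle a c) (hd : deq a c) : req a c := by
  obtain ⟨t, ht⟩ := hle
  obtain ⟨z, ⟨_, ⟨v, hv⟩⟩, ⟨⟨_, _⟩, ⟨q, hq⟩⟩⟩ := hd
  -- c = z * q, z = v * a, a = c * t  ⇒  c = v * c * (t * q)
  have key : c = v * c * (t * q) := by
    calc c = z * q := hq
    _ = (v * a) * q := by rw [← hv]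
    _ = (v * (c * t)) * q := by rw [← ht]
    _ = v * c * (t * q) := by simp [mul_assoc]
  obtain ⟨m, n, hmn, hpow⟩ := Finite.exists_ne_map_eq_of_infinite (fun k : ℕ => v ^ k)
  obtain ⟨i, j, hij, hpw⟩ : ∃ i j : ℕ, i < j ∧ v ^ i = v ^ j := by
    rcases lt_or_gt_of_ne hmn with h' | h'
    · exact ⟨m, n, h', hpow⟩
    · exact ⟨n, m, h', hpow.symm⟩
  refine ⟨⟨t, ht⟩, ?_⟩
  have hiter := iter_sandwich key
  have heq : c = c * (t * q) ^ (j - i) := by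
    calc c = v ^ j * c * (t * q) ^ j := hiter j
    _ = v ^ i * c * (t * q) ^ j := by rw [← hpw]
    _ = v ^ i * c * ((t * q) ^ i * (t * q) ^ (j - i)) := by
          rw [← pow_add, Nat.add_sub_cancel' hij.le]
    _ = (v ^ i * c * (t * q) ^ i) * (t * q) ^ (j - i) := by simp [mul_assoc]
    _ = c * (t * q) ^ (j - i) := by rw [← hiter i]
  obtain ⟨k, hk⟩ : ∃ k, j - i = k + 1 := ⟨j - i - 1, by omega⟩
  refine ⟨q * (t * q) ^ k, ?_⟩
  calc c = c * (t * q) ^ (j - i) := heq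
  _ = c * ((t * q) * (t * q) ^ k) := by rw [hk, pow_succ']
  _ = (c * t) * (q * (t * q) ^ k) := by simp [mul_assoc]
  _ = a * (q * (t * q) ^ k) := by rw [← ht]



variable {S : Type*} [Semigroup S]

lemma lLe_iff (x y : S) : lLe x y ↔ lle (x : WithOne S) (y : WithOne S) := by
  constructor
  · rintro (rfl | ⟨t, rfl⟩)
    · exact ⟨1, (one_mul _).symm⟩
    · exact ⟨(t : WithOne S), by rw [WithOne.coe_mul]⟩
  · rintro ⟨t, ht⟩
    induction t using WithOne.cases_on
    · rw [one_mul] at ht; exact Or.inl (WithOne.coe_inj.mp ht)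
    · intro ht; rw [← WithOne.coe_mul] at ht; exact Or.inr ⟨a, WithOne.coe_inj.mp ht⟩

lemma rLe_iff (x y : S) : rLe x y ↔ rle (x : WithOne S) (y : WithOne S) := by
  constructor
  · rintro (rfl | ⟨t, rfl⟩)
    · exact ⟨1, (mul_one _).symm⟩
    · exact ⟨(t : WithOne S), by rw [WithOne.coe_mul]⟩
  · rintro ⟨t, ht⟩
    induction t using WithOne.cases_on
    · rw [mul_one] at ht; exact Or.inl (WithOne.coe_inj.mp ht)
    · intro ht; rw [← WithOne.coe_mul] at ht; exact Or.inr ⟨a, WithOne.coe_inj.mp ht⟩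

lemma LEquiv_iff (x y : S) : LEquiv x y ↔ leq (x : WithOne S) (y : WithOne S) := by
  unfold LEquiv leq; rw [lLe_iff, lLe_iff]

lemma REquiv_iff (x y : S) : REquiv x y ↔ req (x : WithOne S) (y : WithOne S) := by
  unfold REquiv req; rw [rLe_iff, rLe_iff]

lemma DEquiv_iff (x y : S) : DEquiv x y ↔ deq (x : WithOne S) (y : WithOne S) := by
  constructor
  · rintro ⟨z, hl, hr⟩
    exact ⟨(z : WithOne S), (LEquiv_iff x z).mp hl, (REquiv_iff z y).mp hr⟩
  · rintro ⟨z, hl, hr⟩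
    obtain ⟨t, ht⟩ := hl.2
    obtain ⟨w, hw⟩ : ∃ w : S, z = (w : WithOne S) := by
      induction t using WithOne.cases_on
      · exact ⟨x, by rw [ht, one_mul]⟩
      · intro ht; exact ⟨a * x, by rw [ht, WithOne.coe_mul]⟩
    subst hw
    exact ⟨w, (LEquiv_iff x w).mpr hl, (REquiv_iff w y).mpr hr⟩

end GreenAux

open GreenAux in
/-- Let `S` be a finite semigroup acting on its regular `L`-classes by
`L · s = Ls` if `Ls` is in the same `D`-class as `L`, and undefined otherwise.
This is a well-defined action by partial functions: (1) for regular `x L y`,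
whether `L_x · s` is defined does not depend on the representative, and when
defined the images `L_{xs}`, `L_{ys}` coincide (so each `s` induces a partial
function on the set of regular `L`-classes); (2) the partial function induced
by `s * t` is the composite of those induced by `s` and `t`. -/
theorem action_on_L_classes_well_defined
    {S : Type*} [Semigroup S] [Fintype S] :
    (∀ x y s : S, IsRegularElem x → LEquiv x y →
      ((DEquiv (x * s) x ↔ DEquiv (y * s) y) ∧
        (DEquiv (x * s) x → LEquiv (x * s) (y * s)))) ∧
    (∀ x s t : S, IsRegularElem x →
      (DEquiv (x * (s * t)) x ↔
        (DEquiv (x * s) x ∧ DEquiv ((x * s) * t) (x * s)))) := by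
  haveI : Finite (WithOne S) := Finite.of_equiv (Option S) (Equiv.refl _)
  constructor
  · intro x y s _ hL
    rw [LEquiv_iff] at hL
    have hxy : deq ((x : WithOne S)) (y : WithOne S) := leq_deq hL
    have hL' : leq ((x * s : S) : WithOne S) ((y * s : S) : WithOne S) := by
      rw [WithOne.coe_mul, WithOne.coe_mul]; exact leq_mul_right _ hL
    refine ⟨?_, fun _ => (LEquiv_iff _ _).mpr hL'⟩
    rw [DEquiv_iff, DEquiv_iff]
    constructor
    · intro h
      exact deq_trans (deq_trans (deq_symm (leq_deq hL')) h) hxy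
    · intro h
      exact deq_trans (deq_trans (leq_deq hL') h) (deq_symm hxy)
  · intro x s t _
    rw [mul_assoc, DEquiv_iff, DEquiv_iff, DEquiv_iff]
    have hrle1 : rle ((x * (s * t) : S) : WithOne S) ((x * s : S) : WithOne S) :=
      ⟨(t : WithOne S), by rw [← WithOne.coe_mul, ← mul_assoc]⟩
    have hrle2 : rle ((x * s : S) : WithOne S) ((x : S) : WithOne S) :=
      ⟨(s : WithOne S), by rw [← WithOne.coe_mul]⟩
    constructor
    · intro h
      have hreq : req ((x * (s * t) : S) : WithOne S) (x : WithOne S) :=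
        stab (rle_trans hrle1 hrle2) h
      constructor
      · exact req_deq ⟨hrle2, rle_trans hreq.2 hrle1⟩
      · exact req_deq ⟨hrle1, rle_trans hrle2 hreq.2⟩
    · rintro ⟨h1, h2⟩
      exact deq_trans h2 h1
end

section
/- Let S be a finite regular semigroup. The congruence induced by the morphism S → S^{L′} (the action on regular L-classes within D-classes) is the largest congruence on S contained in Green's relation L. -/
section Green

variable {S : Type*} [Semigroup S]

/-- `r` is a (two-sided) semigroup congruence. -/
def IsCong (r : S → S → Prop) : Prop :=
  Equivalence r ∧ ∀ a b c : S, r a b → r (c * a) (c * b) ∧ r (a * c) (b * c)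

/-- `x` and `y` induce the same partial function on the `L`-classes of `S`
(acting by `L_z · s = L_{zs}` when `L_{zs}` is `D`-equivalent to `L_z`):
the kernel congruence of `S → S^{L′}`. -/
def ActsSameOnLClasses (x y : S) : Prop :=
  ∀ z : S, (DEquiv (z * x) z ↔ DEquiv (z * y) z) ∧
    (DEquiv (z * x) z → LEquiv (z * x) (z * y))

end Green


section AuxGreen

variable {S : Type*} [Semigroup S]

theorem lLe_trans' {x y z : S} (h1 : lLe x y) (h2 : lLe y z) : lLe x z := by
  rcases h1 with rfl | ⟨t, rfl⟩
  · exact h2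
  · rcases h2 with rfl | ⟨u, rfl⟩
    · exact Or.inr ⟨t, rfl⟩
    · exact Or.inr ⟨t * u, by rw [mul_assoc]⟩

theorem rLe_trans' {x y z : S} (h1 : rLe x y) (h2 : rLe y z) : rLe x z := by
  rcases h1 with rfl | ⟨t, rfl⟩
  · exact h2
  · rcases h2 with rfl | ⟨u, rfl⟩
    · exact Or.inr ⟨t, rfl⟩
    · exact Or.inr ⟨u * t, by rw [mul_assoc]⟩

theorem lequiv_refl (x : S) : LEquiv x x := ⟨Or.inl rfl, Or.inl rfl⟩
theorem lequiv_symm {x y : S} (h : LEquiv x y) : LEquiv y x := ⟨h.2, h.1⟩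
theorem lequiv_trans' {x y z : S} (h1 : LEquiv x y) (h2 : LEquiv y z) : LEquiv x z :=
  ⟨lLe_trans' h1.1 h2.1, lLe_trans' h2.2 h1.2⟩

theorem lequiv_mul_right {x y : S} (c : S) (h : LEquiv x y) : LEquiv (x * c) (y * c) := by
  constructor
  · rcases h.1 with rfl | ⟨t, rfl⟩
    · exact Or.inl rfl
    · exact Or.inr ⟨t, by rw [mul_assoc]⟩
  · rcases h.2 with rfl | ⟨t, rfl⟩
    · exact Or.inl rfl
    · exact Or.inr ⟨t, by rw [mul_assoc]⟩

theorem exists_idem_pow {M : Type*} [Monoid M] [Finite M] (a : M) :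
    ∃ n, 0 < n ∧ a ^ n * a ^ n = a ^ n := by
  obtain ⟨i, j, hne, hij⟩ := Finite.exists_ne_map_eq_of_infinite (fun n : ℕ => a ^ n)
  wlog hlt : i < j generalizing i j
  · exact this j i hne.symm hij.symm (by omega)
  set d := j - i with hd
  have hd0 : 0 < d := by omega
  have step : ∀ c, a ^ (i + c) = a ^ (i + c + d) := by
    intro c
    have h1 : i + c + d = j + c := by omega
    rw [h1, pow_add, pow_add, ← hij]
  have key : ∀ k c, a ^ (i + c) = a ^ (i + c + k * d) := by
    intro k
    induction k with
    | zero => simp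
    | succ k ih =>
      intro c
      calc a ^ (i + c) = a ^ (i + c + k * d) := ih c
        _ = a ^ (i + (c + k * d)) := by rw [add_assoc]
        _ = a ^ (i + (c + k * d) + d) := step _
        _ = a ^ (i + c + (k + 1) * d) := by
            congr 1; ring
  set N := d * (i + 1) with hN
  have hiN : i ≤ N := by
    calc i ≤ i + 1 := Nat.le_succ i
      _ ≤ d * (i + 1) := Nat.le_mul_of_pos_left (i + 1) hd0
  refine ⟨N, by positivity, ?_⟩
  rw [← pow_add]
  have e1 : N + N = i + (N - i) + (i + 1) * d := by
    have : (i + 1) * d = N := by rw [hN]; ring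
    omega
  have e2 : i + (N - i) = N := by omega
  rw [e1, ← key (i + 1) (N - i), e2]

theorem absorb {M : Type*} [Monoid M] [Finite M] {s z a : M} (h : z = s * z * a) :
    ∃ u : M, z = z * a * u := by
  have iter : ∀ n, z = s ^ n * z * a ^ n := by
    intro n
    induction n with
    | zero => simp
    | succ n ih =>
      calc z = s ^ n * z * a ^ n := ih
        _ = s ^ n * (s * z * a) * a ^ n := by rw [← h]
        _ = s ^ (n + 1) * z * a ^ (n + 1) := by
            rw [pow_succ, pow_succ']; simp [mul_assoc]
  obtain ⟨n, hn, hidem⟩ := exists_idem_pow a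
  have hz : z = z * a ^ n := by
    calc z = s ^ n * z * a ^ n := iter n
      _ = s ^ n * z * (a ^ n * a ^ n) := by rw [hidem]
      _ = (s ^ n * z * a ^ n) * a ^ n := (mul_assoc _ _ _).symm
      _ = z * a ^ n := by rw [← iter n]
  obtain ⟨m, rfl⟩ := Nat.exists_eq_succ_of_ne_zero hn.ne'
  exact ⟨a ^ m, by rw [mul_assoc, ← pow_succ']; exact hz⟩

theorem dequiv_mul_iff [Fintype S] (z x : S) : DEquiv (z * x) z ↔ rLe z (z * x) := by
  haveI : Finite (WithOne S) := inferInstanceAs (Finite (Option S))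
  constructor
  · rintro ⟨w, ⟨_, hl2⟩, _, hr2⟩
    have hs : ∃ s' : WithOne S, (w : WithOne S) = s' * ↑(z * x) := by
      rcases hl2 with rfl | ⟨s, rfl⟩
      · exact ⟨1, (one_mul _).symm⟩
      · exact ⟨s, by rw [WithOne.coe_mul]⟩
    have ht : ∃ t' : WithOne S, (z : WithOne S) = ↑w * t' := by
      rcases hr2 with rfl | ⟨t, rfl⟩
      · exact ⟨1, (mul_one _).symm⟩
      · exact ⟨t, by rw [WithOne.coe_mul]⟩
    obtain ⟨s', hs'⟩ := hs
    obtain ⟨t', ht'⟩ := ht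
    have hz : (z : WithOne S) = s' * (z : WithOne S) * ((x : WithOne S) * t') := by
      calc (z : WithOne S) = ↑w * t' := ht'
        _ = (s' * ↑(z * x)) * t' := by rw [hs']
        _ = s' * (z : WithOne S) * ((x : WithOne S) * t') := by
            rw [WithOne.coe_mul]; simp [mul_assoc]
    obtain ⟨u, hu⟩ := absorb hz
    have hu' : (z : WithOne S) = ↑(z * x) * (t' * u) := by
      calc (z : WithOne S) = ↑z * ((x : WithOne S) * t') * u := hu
        _ = ↑(z * x) * (t' * u) := by rw [WithOne.coe_mul]; simp [mul_assoc]
    by_cases hv : t' * u = 1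
    · rw [hv, mul_one] at hu'
      exact Or.inl (WithOne.coe_inj.mp hu')
    · obtain ⟨c, hc⟩ := WithOne.ne_one_iff_exists.mp hv
      rw [← hc, ← WithOne.coe_mul] at hu'
      exact Or.inr ⟨c, WithOne.coe_inj.mp hu'⟩
  · intro h
    exact ⟨z * x, lequiv_refl _, ⟨Or.inr ⟨x, rfl⟩, h⟩⟩

theorem rr1 {z c a : S} (h : rLe z (z * c * a)) : rLe z (z * c) := by
  rcases h with h | ⟨t, h⟩
  · exact Or.inr ⟨a, h⟩
  · refine Or.inr ⟨a * t, ?_⟩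
    conv_lhs => rw [h]
    rw [mul_assoc]

theorem rr2 {z c a : S} (h : rLe z (z * c * a)) : rLe (z * c) (z * c * a) := by
  rcases h with h | ⟨t, h⟩
  · exact Or.inr ⟨c, by rw [← h]⟩
  · refine Or.inr ⟨t * c, ?_⟩
    conv_lhs => rw [h]
    rw [mul_assoc]

theorem transfer_r {p q c : S} (hL : lLe q p) (h : rLe p (p * c)) : rLe q (q * c) := by
  rcases hL with rfl | ⟨v, rfl⟩
  · exact h
  · rcases h with h | ⟨u, h⟩
    · refine Or.inl ?_
      conv_rhs => rw [mul_assoc, ← h]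
    · refine Or.inr ⟨u, ?_⟩
      conv_lhs => rw [h]
      simp [mul_assoc]


end AuxGreen

/-- For a finite regular semigroup `S`, the congruence induced by the morphism
`S → S^{L′}` is the largest congruence on `S` contained in Green's relation
`L`: it is a congruence, it is contained in `L`, and it contains every
congruence contained in `L`. -/
theorem kernel_of_LM_is_largest_congruence_in_L
    {S : Type*} [Semigroup S] [Fintype S]
    (hreg : ∀ x : S, ∃ y, x = x * y * x) :
    IsCong (ActsSameOnLClasses (S := S)) ∧
    (∀ x y : S, ActsSameOnLClasses x y → LEquiv x y) ∧
    (∀ r : S → S → Prop, IsCong r → (∀ x y : S, r x y → LEquiv x y) →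
      ∀ x y : S, r x y → ActsSameOnLClasses x y) := by
  refine ⟨⟨⟨?_, ?_, ?_⟩, ?_⟩, ?_, ?_⟩
  · -- reflexivity
    intro x z
    exact ⟨Iff.rfl, fun _ => lequiv_refl _⟩
  · -- symmetry
    intro x y h z
    exact ⟨(h z).1.symm, fun d => lequiv_symm ((h z).2 ((h z).1.mpr d))⟩
  · -- transitivity
    intro x y w h1 h2 z
    exact ⟨(h1 z).1.trans (h2 z).1,
      fun d => lequiv_trans' ((h1 z).2 d) ((h2 z).2 ((h1 z).1.mp d))⟩
  · -- compatibility
    intro a b c h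
    have hsymm : ActsSameOnLClasses b a := fun w =>
      ⟨(h w).1.symm, fun d => lequiv_symm ((h w).2 ((h w).1.mpr d))⟩
    constructor
    · -- left compatibility
      intro z
      have main : ∀ p q : S, ActsSameOnLClasses p q →
          rLe z (z * c * p) → rLe z (z * c * q) := by
        intro p q hpq hr
        have h3 : DEquiv ((z * c) * p) (z * c) := (dequiv_mul_iff (z * c) p).mpr (rr2 hr)
        have h4 : DEquiv ((z * c) * q) (z * c) := (hpq (z * c)).1.mp h3
        exact rLe_trans' (rr1 hr) ((dequiv_mul_iff (z * c) q).mp h4)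
      constructor
      · constructor
        · intro hd
          have hr := (dequiv_mul_iff z (c * a)).mp hd
          rw [← mul_assoc] at hr
          have h5 := main a b h hr
          rw [mul_assoc] at h5
          exact (dequiv_mul_iff z (c * b)).mpr h5
        · intro hd
          have hr := (dequiv_mul_iff z (c * b)).mp hd
          rw [← mul_assoc] at hr
          have h5 := main b a hsymm hr
          rw [mul_assoc] at h5
          exact (dequiv_mul_iff z (c * a)).mpr h5
      · intro hd
        have hr := (dequiv_mul_iff z (c * a)).mp hd
        rw [← mul_assoc] at hr
        have h3 : DEquiv ((z * c) * a) (z * c) := (dequiv_mul_iff (z * c) a).mpr (rr2 hr)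
        have hL := (h (z * c)).2 h3
        simpa [mul_assoc] using hL
    · -- right compatibility
      intro z
      have main2 : ∀ p q : S, ActsSameOnLClasses p q →
          rLe z (z * p * c) → rLe z (z * q * c) := by
        intro p q hpq hr
        have h3 : DEquiv (z * p) z := (dequiv_mul_iff z p).mpr (rr1 hr)
        have h4 : DEquiv (z * q) z := (hpq z).1.mp h3
        have hL : LEquiv (z * p) (z * q) := (hpq z).2 h3
        have h6 : rLe (z * q) ((z * q) * c) := transfer_r hL.2 (rr2 hr)
        exact rLe_trans' ((dequiv_mul_iff z q).mp h4) h6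
      constructor
      · constructor
        · intro hd
          have hr := (dequiv_mul_iff z (a * c)).mp hd
          rw [← mul_assoc] at hr
          have h5 := main2 a b h hr
          rw [mul_assoc] at h5
          exact (dequiv_mul_iff z (b * c)).mpr h5
        · intro hd
          have hr := (dequiv_mul_iff z (b * c)).mp hd
          rw [← mul_assoc] at hr
          have h5 := main2 b a hsymm hr
          rw [mul_assoc] at h5
          exact (dequiv_mul_iff z (a * c)).mpr h5
      · intro hd
        have hr := (dequiv_mul_iff z (a * c)).mp hd
        rw [← mul_assoc] at hr
        have h3 : DEquiv (z * a) z := (dequiv_mul_iff z a).mpr (rr1 hr)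
        have hL : LEquiv (z * a) (z * b) := (h z).2 h3
        simpa [mul_assoc] using lequiv_mul_right c hL
  · -- contained in L
    intro x y h
    obtain ⟨x', hx'⟩ := hreg x
    obtain ⟨y', hy'⟩ := hreg y
    have hfx : (x * x') * x = x := hx'.symm
    have hgy : (y * y') * y = y := hy'.symm
    have Dfx : DEquiv ((x * x') * x) (x * x') := by
      rw [hfx]
      exact ⟨x, lequiv_refl x, ⟨Or.inr ⟨x, hx'⟩, Or.inr ⟨x', rfl⟩⟩⟩
    have hL1 : LEquiv ((x * x') * x) ((x * x') * y) := (h (x * x')).2 Dfx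
    rw [hfx] at hL1
    have hxy : lLe x y := lLe_trans' hL1.1 (Or.inr ⟨x * x', rfl⟩)
    have Dgy : DEquiv ((y * y') * y) (y * y') := by
      rw [hgy]
      exact ⟨y, lequiv_refl y, ⟨Or.inr ⟨y, hy'⟩, Or.inr ⟨y', rfl⟩⟩⟩
    have Dgx : DEquiv ((y * y') * x) (y * y') := (h (y * y')).1.mpr Dgy
    have hL2 : LEquiv ((y * y') * x) ((y * y') * y) := (h (y * y')).2 Dgx
    rw [hgy] at hL2
    have hyx : lLe y x := lLe_trans' hL2.2 (Or.inr ⟨y * y', rfl⟩)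
    exact ⟨hxy, hyx⟩
  · -- largest
    intro r hr hrL x y hxy z
    have h1 : r (z * x) (z * y) := (hr.2 x y z hxy).1
    have hL : LEquiv (z * x) (z * y) := hrL _ _ h1
    refine ⟨⟨?_, ?_⟩, fun _ => hL⟩
    · rintro ⟨w, hw1, hw2⟩
      exact ⟨w, lequiv_trans' (lequiv_symm hL) hw1, hw2⟩
    · rintro ⟨w, hw1, hw2⟩
      exact ⟨w, lequiv_trans' hL hw1, hw2⟩
end

section
/- The set of invariant cross-sections CS(G × B) is a meet-subsemilattice of the set-partition lattice SP(G × B), and it is isomorphic as a meet-semilattice to the meet-semilattice of the Rhodes lattice Rh_B(G) (with the contradiction element removed). -/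
/-- A partial equivalence relation (PER): symmetric and transitive.  PERs on a
set `α` correspond exactly to pairs `(Y, Π)` where `Y ⊆ α` (the domain
`{x | r x x}`) and `Π` is a partition of `Y` (the classes), and the order of
the set-partition lattice `SP(α)` (containment of domains plus refinement of
classes) corresponds to implication of relations. -/
def IsPER {α : Type*} (r : α → α → Prop) : Prop :=
  (∀ x y, r x y → r y x) ∧ (∀ x y z, r x y → r y z → r x z)

/-- The set-partition lattice `SP(G × B)`, encoded as PERs on `G × B` ordered
by implication. -/
def SPLattice (G B : Type*) := {r : G × B → G × B → Prop // IsPER r}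

instance {G B : Type*} : PartialOrder (SPLattice G B) :=
  PartialOrder.lift (fun r => r.1) Subtype.val_injective

/-- `(Y, Π)` is a cross-section: no class contains two distinct elements with
the same `B`-coordinate. -/
def IsCross {G B : Type*} (r : SPLattice G B) : Prop :=
  ∀ (g h : G) (b : B), r.1 (g, b) (h, b) → g = h

/-- `(Y, Π)` is invariant under the left `G`-action `g • (h, b) = (g h, b)`. -/
def GInvariant {G B : Type*} [Group G] (r : SPLattice G B) : Prop :=
  ∀ (k : G) (x y : G × B), r.1 x y → r.1 (k * x.1, x.2) (k * y.1, y.2)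

/-- An SPC (Subset, Partition, Cross-section) of the Rhodes lattice
`Rh_B(G)` (the contradiction element removed): a partial partition of `B`
(encoded as a PER) together with, for each class, a `G`-orbit of cross-section
functions to `G`, encoded by the well-defined ratio cocycle
`ρ b b' = f(b)⁻¹ f(b')`. -/
structure RhSPC (G B : Type*) [Group G] where
  per : B → B → Prop
  hper : IsPER per
  rho : B → B → G
  rho_mul : ∀ a b c : B, per a b → per b c → rho a b * rho b c = rho a c
  rho_dom : ∀ a b : B, ¬ per a b → rho a b = 1

/-- The order on `Rh_B(G)`: containment/refinement of the partial partitions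
together with compatibility of the cross-sections. -/
def rhLe {G B : Type*} [Group G] (p q : RhSPC G B) : Prop :=
  (∀ a b : B, p.per a b → q.per a b) ∧ (∀ a b : B, p.per a b → p.rho a b = q.rho a b)

section AuxiliaryLemmas

variable {G B : Type*} [Group G]

lemma sp_le_iff {r s : SPLattice G B} : r ≤ s ↔ ∀ x y, r.1 x y → s.1 x y := Iff.rfl

/-- The meet of two PERs in `SP(G × B)`: pointwise conjunction. -/
def spMeet (r s : SPLattice G B) : SPLattice G B :=
  ⟨fun x y => r.1 x y ∧ s.1 x y,
    ⟨fun x y h => ⟨r.2.1 _ _ h.1, s.2.1 _ _ h.2⟩,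
     fun x y z h1 h2 => ⟨r.2.2 _ _ _ h1.1 h2.1, s.2.2 _ _ _ h1.2 h2.2⟩⟩⟩

lemma spMeet_isGLB (r s : SPLattice G B) : IsGLB {r, s} (spMeet r s) := by
  constructor
  · rintro t (rfl | rfl)
    · exact fun x y h => h.1
    · exact fun x y h => h.2
  · intro t ht
    have h1 : t ≤ r := ht (Set.mem_insert _ _)
    have h2 : t ≤ s := ht (Set.mem_insert_of_mem _ rfl)
    exact fun x y h => ⟨h1 x y h, h2 x y h⟩

lemma shift {r : SPLattice G B} (hi : GInvariant r) {g h : G} {b b' : B} :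
    r.1 (g, b) (h, b') ↔ r.1 (1, b) (g⁻¹ * h, b') := by
  constructor
  · intro hr
    simpa using hi g⁻¹ _ _ hr
  · intro hr
    simpa using hi g _ _ hr

/-- The partial partition of `B` induced by an invariant cross-section. -/
def perOf (r : SPLattice G B) (b b' : B) : Prop := ∃ g : G, r.1 ((1 : G), b) (g, b')

open Classical in
/-- The ratio cocycle induced by an invariant cross-section. -/
noncomputable def rhoOf (r : SPLattice G B) (b b' : B) : G :=
  if h : perOf r b b' then h.choose else 1

lemma rhoOf_spec {r : SPLattice G B} {b b' : B} (h : perOf r b b') :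
    r.1 ((1 : G), b) (rhoOf r b b', b') := by
  rw [rhoOf, dif_pos h]
  exact h.choose_spec

lemma rhoOf_eq {r : SPLattice G B} (hc : IsCross r) {b b' : B} {g : G}
    (h : r.1 ((1 : G), b) (g, b')) : rhoOf r b b' = g :=
  hc _ _ _ (r.2.2 _ _ _ (r.2.1 _ _ (rhoOf_spec ⟨g, h⟩)) h)

lemma mem_iff {r : SPLattice G B} (hc : IsCross r) (hi : GInvariant r)
    {g h : G} {b b' : B} :
    r.1 (g, b) (h, b') ↔ perOf r b b' ∧ h = g * rhoOf r b b' := by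
  constructor
  · intro hr
    have h1 : r.1 (1, b) (g⁻¹ * h, b') := (shift hi).1 hr
    refine ⟨⟨_, h1⟩, ?_⟩
    rw [rhoOf_eq hc h1]
    group
  · rintro ⟨hp, rfl⟩
    exact (shift hi).2 (by simpa using rhoOf_spec hp)

lemma rhspc_ext {p q : RhSPC G B} (h1 : p.per = q.per) (h2 : p.rho = q.rho) : p = q := by
  cases p; cases q
  cases h1; cases h2
  rfl

/-- The map from invariant cross-sections to SPCs of the Rhodes lattice. -/
noncomputable def toRh (x : {r : SPLattice G B // IsCross r ∧ GInvariant r}) : RhSPC G B where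
  per := perOf x.1
  hper := by
    obtain ⟨r, hc, hi⟩ := x
    constructor
    · rintro b b' ⟨g, hg⟩
      refine ⟨g⁻¹, ?_⟩
      simpa using (shift hi).1 (r.2.1 _ _ hg)
    · rintro a b c ⟨g, hg⟩ ⟨h, hh⟩
      exact ⟨g * h, r.2.2 _ _ _ hg ((shift hi).2 (by simpa using hh))⟩
  rho := rhoOf x.1
  rho_mul := by
    obtain ⟨r, hc, hi⟩ := x
    intro a b c hab hbc
    have ha := rhoOf_spec hab
    have hb := rhoOf_spec hbc
    have h2 : r.1 (rhoOf r a b, b) (rhoOf r a b * rhoOf r b c, c) :=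
      (shift hi).2 (by simpa using hb)
    exact (rhoOf_eq hc (r.2.2 _ _ _ ha h2)).symm
  rho_dom := by
    intro a b hab
    rw [rhoOf, dif_neg hab]

/-- Derived facts about `RhSPC`. -/
lemma rh_per_self {p : RhSPC G B} {b b' : B} (h : p.per b b') : p.per b b :=
  p.hper.2 _ _ _ h (p.hper.1 _ _ h)

lemma rh_rho_self {p : RhSPC G B} {b : B} (h : p.per b b) : p.rho b b = 1 := by
  have := p.rho_mul b b b h h
  exact mul_left_cancel (a := p.rho b b) (by rw [this, mul_one])

lemma rh_rho_inv {p : RhSPC G B} {b b' : B} (h : p.per b b') :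
    p.rho b' b = (p.rho b b')⁻¹ := by
  have h' := p.hper.1 _ _ h
  have := p.rho_mul b b' b h h'
  rw [rh_rho_self (rh_per_self h)] at this
  exact (inv_eq_of_mul_eq_one_right this).symm

/-- The inverse construction: the invariant cross-section of an SPC. -/
def ofRh (p : RhSPC G B) : SPLattice G B :=
  ⟨fun x y => p.per x.2 y.2 ∧ y.1 = x.1 * p.rho x.2 y.2,
    ⟨by
      rintro x y ⟨hp, he⟩
      refine ⟨p.hper.1 _ _ hp, ?_⟩
      rw [he, rh_rho_inv hp, mul_assoc, mul_inv_cancel, mul_one],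
     by
      rintro x y z ⟨hp1, he1⟩ ⟨hp2, he2⟩
      refine ⟨p.hper.2 _ _ _ hp1 hp2, ?_⟩
      rw [he2, he1, mul_assoc, p.rho_mul _ _ _ hp1 hp2]⟩⟩

lemma ofRh_cross (p : RhSPC G B) : IsCross (ofRh p) := by
  rintro g h b ⟨hp, he⟩
  have hp' : p.per b b := hp
  have he' : h = g * p.rho b b := he
  rw [he', rh_rho_self hp', mul_one]

lemma ofRh_invariant (p : RhSPC G B) : GInvariant (ofRh p) := by
  rintro k x y ⟨hp, he⟩
  exact ⟨hp, by rw [he, mul_assoc]⟩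

end AuxiliaryLemmas

/-- The set `CS(G × B)` of invariant cross-sections is a meet-subsemilattice of
the set-partition lattice `SP(G × B)` (binary meets exist in `SP(G × B)` and
meets of invariant cross-sections are invariant cross-sections), and it is
isomorphic as a (meet-semi)lattice to the Rhodes lattice `Rh_B(G)` with the
contradiction removed: there is an order-isomorphism between them. -/
theorem invariant_cross_sections_meet_subsemilattice_iso_Rhodes
    (G B : Type*) [Group G] [Fintype G] [Fintype B] :
    (∀ r s : SPLattice G B, ∃ m : SPLattice G B, IsGLB {r, s} m) ∧
    (∀ r s m : SPLattice G B, IsCross r → GInvariant r → IsCross s →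
      GInvariant s → IsGLB {r, s} m → IsCross m ∧ GInvariant m) ∧
    (∃ e : {r : SPLattice G B // IsCross r ∧ GInvariant r} → RhSPC G B,
      Function.Bijective e ∧
        ∀ x y : {r : SPLattice G B // IsCross r ∧ GInvariant r},
          x.1 ≤ y.1 ↔ rhLe (e x) (e y)) := by
  refine ⟨fun r s => ⟨spMeet r s, spMeet_isGLB r s⟩, ?_, ?_⟩
  · intro r s m hcr hir hcs his hglb
    have hm : m = spMeet r s := hglb.unique (spMeet_isGLB r s)
    subst hm
    exact ⟨fun g h b hh => hcr g h b hh.1,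
      fun k x y h => ⟨hir k x y h.1, his k x y h.2⟩⟩
  · refine ⟨toRh, ⟨?_, ?_⟩, ?_⟩
    · -- injective
      intro x y hxy
      have hper : perOf x.1 = perOf y.1 := congrArg RhSPC.per hxy
      have hrho : rhoOf x.1 = rhoOf y.1 := congrArg RhSPC.rho hxy
      apply Subtype.ext
      apply Subtype.ext
      funext a c
      apply propext
      obtain ⟨g, b⟩ := a
      obtain ⟨h, b'⟩ := c
      rw [mem_iff x.2.1 x.2.2, mem_iff y.2.1 y.2.2, hper, hrho]
    · -- surjective
      intro p
      refine ⟨⟨ofRh p, ofRh_cross p, ofRh_invariant p⟩, ?_⟩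
      have hper : perOf (ofRh p) = p.per := by
        funext b b'
        apply propext
        constructor
        · rintro ⟨g, hp, -⟩
          exact hp
        · intro h
          exact ⟨p.rho b b', h, (one_mul _).symm⟩
      apply rhspc_ext
      · exact hper
      · funext b b'
        by_cases hp : p.per b b'
        · exact rhoOf_eq (ofRh_cross p) ⟨hp, (one_mul _).symm⟩
        · have hnp : ¬ perOf (ofRh p) b b' := by
            rintro ⟨g, hq, -⟩; exact hp hq
          show rhoOf (ofRh p) b b' = _
          rw [rhoOf, dif_neg hnp, p.rho_dom _ _ hp]
    · -- order-compatibility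
      intro x y
      constructor
      · intro hle
        constructor
        · rintro a b ⟨g, hg⟩
          exact ⟨g, hle _ _ hg⟩
        · intro a b hp
          exact (rhoOf_eq y.2.1 (hle _ _ (rhoOf_spec hp))).symm
      · rintro ⟨h1, h2⟩
        intro a c hr
        have hx := (mem_iff x.2.1 x.2.2).1 hr
        refine (mem_iff y.2.1 y.2.2).2 ⟨h1 _ _ hx.1, ?_⟩
        rw [hx.2]
        exact congrArg (a.1 * ·) (h2 _ _ hx.1)
end

section
/- For a transformation semigroup (Q, S) by partial functions, the intersection of any family of injective congruences on Q is an injective congruence; consequently there is a unique minimal injective congruence on (Q, S). -/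
/-- `r` is an injective congruence on the transformation semigroup `(Q, S)` of
partial functions: an equivalence relation on `Q` compatible with the action
(`q ≈ q'` and both images defined implies images equivalent) such that every
`s ∈ S` acts as an injective partial function on the quotient `Q/≈`. -/
def InjCong {Q : Type*} (S : Set (Q → Option Q)) (r : Q → Q → Prop) : Prop :=
  Equivalence r ∧
  (∀ s ∈ S, ∀ q q' a b, r q q' → s q = some a → s q' = some b → r a b) ∧
  (∀ s ∈ S, ∀ q q' a b, s q = some a → s q' = some b → r a b → r q q')

/-- For a transformation semigroup `(Q, S)` by partial functions on a finite
set, the intersection of any family of injective congruences is an injective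
congruence; consequently there is a unique minimal injective congruence. -/
theorem minimal_injective_congruence
    (Q : Type*) [Fintype Q] (S : Set (Q → Option Q)) :
    (∀ (ι : Type) (r : ι → Q → Q → Prop), (∀ i, InjCong S (r i)) →
      InjCong S (fun q q' => ∀ i, r i q q')) ∧
    (∃ m : Q → Q → Prop, InjCong S m ∧
      (∀ r : Q → Q → Prop, InjCong S r → ∀ q q', m q q' → r q q') ∧
      (∀ m' : Q → Q → Prop, InjCong S m' →
        (∀ r : Q → Q → Prop, InjCong S r → ∀ q q', m' q q' → r q q') →
        m' = m)) := by
  constructor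
  · intro ι r hr
    refine ⟨⟨fun q i => (hr i).1.refl q, fun h i => (hr i).1.symm (h i),
      fun h h' i => (hr i).1.trans (h i) (h' i)⟩,
      fun s hs q q' a b h ha hb i => (hr i).2.1 s hs q q' a b (h i) ha hb,
      fun s hs q q' a b ha hb h i => (hr i).2.2 s hs q q' a b ha hb (h i)⟩
  · refine ⟨fun q q' => ∀ r, InjCong S r → r q q', ⟨⟨fun q r hr => hr.1.refl q,
      fun h r hr => hr.1.symm (h r hr), fun h h' r hr => hr.1.trans (h r hr) (h' r hr)⟩,
      fun s hs q q' a b h ha hb r hr => hr.2.1 s hs q q' a b (h r hr) ha hb,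
      fun s hs q q' a b ha hb h r hr => hr.2.2 s hs q q' a b ha hb (h r hr)⟩,
      fun r hr q q' h => h r hr, ?_⟩
    intro m' hm' hmin
    funext q q'
    exact propext ⟨fun h r hr => hmin r hr q q' h, fun h => h m' hm'⟩
end
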